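/- arXiv:1201.4154 — 4 statements merged into one kernel-verified Lean document; each statement's English description precedes it below -/
import Mathlib

section
/- With θ a 2n×m matrix of odd elements of a supercommutative superalgebra, θ̂ = θᵀJ, and B := √(I_{2n} − θθ̂) defined by the (finite, terminating) binomial Taylor series in the nilpotent matrix θθ̂, one has BᵀJ = JB. -/
noncomputable section

open Matrix

/-- The standard symplectic matrix `J = [[0, Iₙ],[-Iₙ, 0]]`, with entries in `Λ`. -/
def sympJ (n : ℕ) (Λ : Type*) [Ring Λ] :
    Matrix (Fin n ⊕ Fin n) (Fin n ⊕ Fin n) Λ :=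
  Matrix.fromBlocks 0 1 (-1) 0

/-- The binomial coefficient `binom(1/2, k)`, the `k`-th Taylor coefficient of `√(1+x)`. -/
def sqrtCoeff (k : ℕ) : ℝ :=
  (∏ i ∈ Finset.range k, ((1 : ℝ) / 2 - (i : ℝ))) / (Nat.factorial k)

/-- The terminating binomial Taylor series `√(1 - M) = Σ_{k<K} binom(1/2,k) (-M)^k`
for a matrix `M` with nilpotent entries. -/
def sqrtOneSub {ι : Type*} [Fintype ι] [DecidableEq ι] {Λ : Type*} [Ring Λ]
    [Algebra ℝ Λ] (K : ℕ) (M : Matrix ι ι Λ) : Matrix ι ι Λ :=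
  ∑ k ∈ Finset.range K, sqrtCoeff k • (-M) ^ k

/-- An element anticommuting with two elements commutes with their product. -/
lemma odd_comm_aux {Λ : Type*} [Ring Λ] {x y z : Λ}
    (hxy : x * y = -(y * x)) (hxz : x * z = -(z * x)) : Commute x (y * z) := by
  show x * (y * z) = (y * z) * x
  calc x * (y * z) = (x * y) * z := (mul_assoc _ _ _).symm
    _ = -(y * (x * z)) := by rw [hxy, neg_mul, mul_assoc]
    _ = y * (z * x) := by rw [hxz, mul_neg, neg_neg]
    _ = (y * z) * x := (mul_assoc _ _ _).symm

/-- Transpose of a product when all entries commute. -/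
lemma transpose_mul_comm {ι κ ρ Λ : Type*} [Fintype κ] [Ring Λ]
    (A : Matrix ι κ Λ) (B : Matrix κ ρ Λ)
    (h : ∀ i j k l, Commute (A i j) (B k l)) : (A * B)ᵀ = Bᵀ * Aᵀ := by
  ext i j
  simp only [transpose_apply, mul_apply]
  exact Finset.sum_congr rfl fun p _ => (h j p p i).eq

/-- with `θ` a `2n × m` matrix of odd (pairwise anticommuting)
elements, `θ̂ = θᵀJ`, and `B = √(I_{2n} - θθ̂)` defined by the terminating
binomial Taylor series, one has `BᵀJ = JB`. -/
theorem sqrt_symplectic_transpose (m n : ℕ) (Λ : Type*) [Ring Λ] [Algebra ℝ Λ]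
    (θ : Matrix (Fin n ⊕ Fin n) (Fin m) Λ)
    (hodd : ∀ i j k l, θ i j * θ k l = -(θ k l * θ i j)) :
    (sqrtOneSub (n * m + 1) (θ * (θᵀ * sympJ n Λ)))ᵀ * sympJ n Λ
      = sympJ n Λ * sqrtOneSub (n * m + 1) (θ * (θᵀ * sympJ n Λ)) := by
  set J : Matrix (Fin n ⊕ Fin n) (Fin n ⊕ Fin n) Λ := sympJ n Λ with hJdef
  set M : Matrix (Fin n ⊕ Fin n) (Fin n ⊕ Fin n) Λ := θ * (θᵀ * J) with hMdef
  -- entries of J are central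
  have hJcen : ∀ (i j : Fin n ⊕ Fin n) (x : Λ), Commute x (J i j) := by
    intro i j x
    rcases i with i | i <;> rcases j with j | j <;>
      simp only [hJdef, sympJ, fromBlocks_apply₁₁, fromBlocks_apply₁₂,
        fromBlocks_apply₂₁, fromBlocks_apply₂₂, Matrix.zero_apply, one_apply, Matrix.neg_apply] <;>
      first
        | exact Commute.zero_right x
        | (split_ifs <;>
            first
              | exact Commute.one_right x
              | exact Commute.zero_right x
              | exact (Commute.one_right x).neg_right
              | exact (Commute.zero_right x).neg_right)
  -- θ entries anticommute with entries of θᵀ * J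
  have hanti : ∀ (a : Fin n ⊕ Fin n) (b : Fin m) (l : Fin m) (i : Fin n ⊕ Fin n),
      θ a b * ((θᵀ * J) l i) = -(((θᵀ * J) l i) * θ a b) := by
    intro a b l i
    simp only [mul_apply, transpose_apply]
    rw [Finset.mul_sum, Finset.sum_mul, ← Finset.sum_neg_distrib]
    refine Finset.sum_congr rfl fun p _ => ?_
    calc θ a b * (θ p l * J p i) = (θ a b * θ p l) * J p i := (mul_assoc _ _ _).symm
      _ = -((θ p l * θ a b) * J p i) := by rw [hodd a b p l, neg_mul]
      _ = -(θ p l * (J p i * θ a b)) := by rw [mul_assoc, (hJcen p i (θ a b)).eq]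
      _ = -((θ p l * J p i) * θ a b) := by rw [mul_assoc]
  -- θ entries commute with entries of M
  have hθM : ∀ (a : Fin n ⊕ Fin n) (b : Fin m) (i j : Fin n ⊕ Fin n),
      Commute (θ a b) (M i j) := by
    intro a b i j
    have : M i j = ∑ l, θ i l * ((θᵀ * J) l j) := by
      simp [hMdef, mul_apply]
    rw [this]
    refine Commute.sum_right _ _ _ fun l _ => ?_
    exact odd_comm_aux (hodd a b i l) (hanti a b l j)
  -- entries of M commute pairwise
  have hMM : ∀ (i j k l : Fin n ⊕ Fin n), Commute (M i j) (M k l) := by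
    intro i j k l
    have : M k l = ∑ p, θ k p * ((θᵀ * J) p l) := by
      simp [hMdef, mul_apply]
    rw [this]
    refine Commute.sum_right _ _ _ fun p _ => ?_
    refine Commute.mul_right ((hθM k p i j).symm) ?_
    have : (θᵀ * J) p l = ∑ q, θ q p * J q l := by
      simp [mul_apply]
    rw [this]
    refine Commute.sum_right _ _ _ fun q _ => ?_
    exact Commute.mul_right ((hθM q p i j).symm) (hJcen q l (M i j))
  set N : Matrix (Fin n ⊕ Fin n) (Fin n ⊕ Fin n) Λ := -M with hNdef
  have hNN : ∀ (i j k l : Fin n ⊕ Fin n), Commute (N i j) (N k l) := by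
    intro i j k l
    simp only [hNdef, Matrix.neg_apply]
    exact ((hMM i j k l).neg_left).neg_right
  have hNpow : ∀ (k : ℕ) (i j a b : Fin n ⊕ Fin n),
      Commute ((N ^ k) i j) (N a b) := by
    intro k
    induction k with
    | zero =>
      intro i j a b
      simp only [pow_zero, one_apply]
      split_ifs
      · exact Commute.one_left _
      · exact Commute.zero_left _
    | succ k ih =>
      intro i j a b
      rw [pow_succ]
      have : (N ^ k * N) i j = ∑ p, (N ^ k) i p * N p j := by
        simp [mul_apply]
      rw [this]
      refine Commute.sum_left _ _ _ fun p _ => ?_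
      exact Commute.mul_left (ih i p a b) (hNN p j a b)
  -- (θθᵀ)ᵀ = -(θθᵀ)
  have hT1 : (θ * θᵀ)ᵀ = -(θ * θᵀ) := by
    ext i j
    simp only [transpose_apply, mul_apply, Matrix.neg_apply]
    rw [← Finset.sum_neg_distrib]
    exact Finset.sum_congr rfl fun l _ => hodd j l i l
  have hJT : Jᵀ = -J := by
    simp only [hJdef, sympJ, fromBlocks_transpose, transpose_zero, transpose_one,
      transpose_neg]
    ext i j
    rcases i with i | i <;> rcases j with j | j <;> simp
  have hMassoc : M = (θ * θᵀ) * J := (Matrix.mul_assoc θ θᵀ J).symm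
  have hMT : Mᵀ = J * (θ * θᵀ) := by
    rw [hMassoc, transpose_mul_comm _ _ (fun i j k l => hJcen k l _), hJT, hT1,
      neg_mul_neg]
  have hMJ : Mᵀ * J = J * M := by
    rw [hMT, hMassoc, mul_assoc]
  have hNJ : Nᵀ * J = J * N := by
    rw [hNdef, transpose_neg, neg_mul, hMJ, mul_neg]
  have key : ∀ k : ℕ, (N ^ k)ᵀ * J = J * N ^ k := by
    intro k
    induction k with
    | zero => simp
    | succ k ih =>
      rw [pow_succ, transpose_mul_comm _ _ (fun i j a b => hNpow k i j a b),
        mul_assoc, ih, ← mul_assoc, hNJ, mul_assoc, ← pow_succ', pow_succ]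
  show (sqrtOneSub (n * m + 1) M)ᵀ * J = J * sqrtOneSub (n * m + 1) M
  unfold sqrtOneSub
  rw [transpose_sum, Finset.sum_mul, Finset.mul_sum]
  refine Finset.sum_congr rfl fun k _ => ?_
  rw [transpose_smul, smul_mul_assoc, ← hNdef, key k, mul_smul_comm]
end
end

section
/- Let x be an m×m matrix over a commutative ring with xᵀx = I_m, let y be a 2n×2n matrix with yᵀJy = J, and let θ be a 2n×m matrix of odd elements of a supercommutative superalgebra containing that ring. Define A = √(I_m − θ̂θ), B = √(I_{2n} − θθ̂) with θ̂ = θᵀJ. Then the block matrix X with blocks X_{I,I} = xA, X_{I,II} = xθ̂y, X_{II,I} = θ, X_{II,II} = By satisfies the three orthosymplectic relations: (xA)ᵀ(xA) + θᵀJθ = I_m, −(xA)ᵀ(xθ̂y) + θᵀJ(By) = 0, and −(xθ̂y)ᵀ(xθ̂y) + (By)ᵀJ(By) = J. -/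
noncomputable section

open Matrix

namespace OspAux

open Polynomial Finset

/-! ### The square-root polynomial -/

theorem descPoch_prod (r : ℝ) (k : ℕ) :
    (descPochhammer ℤ k).smeval r = ∏ i ∈ Finset.range k, (r - i) := by
  induction k with
  | zero => simp [descPochhammer_zero, smeval_one]
  | succ k ih =>
    rw [descPochhammer_succ_right, smeval_mul, ih, Finset.prod_range_succ]
    congr 1
    simp [smeval_sub, smeval_X, smeval_natCast]

theorem sqrtCoeff_eq_choose (k : ℕ) : sqrtCoeff k = Ring.choose ((1:ℝ)/2) k := by
  have h := Ring.descPochhammer_eq_factorial_smul_choose ((1:ℝ)/2) k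
  rw [descPoch_prod] at h
  rw [sqrtCoeff, h, nsmul_eq_mul]
  field_simp

/-- The truncated Taylor polynomial of `√(1+X)`. -/
def sqrtPoly (K : ℕ) : ℝ[X] := ∑ k ∈ Finset.range K, C (sqrtCoeff k) * X ^ k

theorem sqrtPoly_coeff (K j : ℕ) :
    (sqrtPoly K).coeff j = if j < K then sqrtCoeff j else 0 := by
  rw [sqrtPoly, finset_sum_coeff]
  simp only [coeff_C_mul, coeff_X_pow]
  split
  · rename_i h
    rw [Finset.sum_eq_single j]
    · simp
    · intro b _ hb; simp [Ne.symm hb]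
    · intro h2; simp at h2; omega
  · rename_i h
    apply Finset.sum_eq_zero
    intro b hb
    simp only [Finset.mem_range] at hb
    have : ¬ (j = b) := by omega
    simp [this]

theorem sqrtPoly_sq_coeff (K j : ℕ) (hj : j < K) :
    (sqrtPoly K * sqrtPoly K).coeff j = ((1:ℕ).choose j : ℝ) := by
  rw [coeff_mul]
  have : ∀ p ∈ Finset.HasAntidiagonal.antidiagonal j,
      (sqrtPoly K).coeff p.1 * (sqrtPoly K).coeff p.2
        = Ring.choose ((1:ℝ)/2) p.1 * Ring.choose ((1:ℝ)/2) p.2 := by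
    intro p hp
    rw [Finset.HasAntidiagonal.mem_antidiagonal] at hp
    rw [sqrtPoly_coeff, sqrtPoly_coeff, if_pos (by omega), if_pos (by omega),
      sqrtCoeff_eq_choose, sqrtCoeff_eq_choose]
  rw [Finset.sum_congr rfl this, ← Ring.add_choose_eq j (Commute.all _ _)]
  norm_num
  rw [show ((1:ℝ) = ((1:ℕ):ℝ)) by norm_num, Ring.choose_natCast]

theorem sqrtPoly_sq (K : ℕ) :
    ∃ g : ℝ[X], sqrtPoly K * sqrtPoly K = 1 + X + X ^ K * g := by
  have hdvd : X ^ K ∣ (sqrtPoly K * sqrtPoly K - (1 + X)) := by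
    rw [X_pow_dvd_iff]
    intro d hd
    rw [coeff_sub, sqrtPoly_sq_coeff K d hd]
    rcases d with (_ | _ | d) <;> simp [coeff_one, coeff_X, Nat.choose]
  obtain ⟨g, hg⟩ := hdvd
  exact ⟨g, by linear_combination (norm := ring_nf) hg⟩

theorem sqrtOneSub_eq_aeval {ι : Type*} [Fintype ι] [DecidableEq ι] {Λ : Type*} [Ring Λ]
    [Algebra ℝ Λ] (K : ℕ) (M : Matrix ι ι Λ) :
    sqrtOneSub K M = aeval (-M) (sqrtPoly K) := by
  rw [sqrtPoly, map_sum, sqrtOneSub]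
  refine Finset.sum_congr rfl fun k _ => ?_
  rw [_root_.map_mul, aeval_C, map_pow, aeval_X, Algebra.smul_def]

theorem sqrtOneSub_sq {ι : Type*} [Fintype ι] [DecidableEq ι] {Λ : Type*} [Ring Λ]
    [Algebra ℝ Λ] (K : ℕ) (M : Matrix ι ι Λ) (hM : M ^ K = 0) :
    sqrtOneSub K M * sqrtOneSub K M = 1 - M := by
  obtain ⟨g, hg⟩ := sqrtPoly_sq K
  rw [sqrtOneSub_eq_aeval, ← _root_.map_mul, hg]
  have hMK : (-M) ^ K = 0 := by rw [neg_pow, hM, mul_zero]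
  rw [map_add, map_add, _root_.map_mul, map_pow, aeval_X, hMK, zero_mul, add_zero,
    _root_.map_one, sub_eq_add_neg]

/-! ### Nilpotency of spans of anticommuting odd elements -/

theorem sq_zero_of_anti {Λ : Type*} [Ring Λ] [Algebra ℝ Λ] {a : Λ}
    (h : a * a = -(a * a)) : a * a = 0 := by
  have h2 : (2:ℝ) • (a*a) = 0 := by
    rw [two_smul]; nth_rewrite 1 [h]; exact neg_add_cancel _
  have : a*a = ((1:ℝ)/2) • ((2:ℝ) • (a*a)) := by rw [smul_smul]; norm_num
  rw [this, h2, smul_zero]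

theorem mul_list_prod_zero {Λ : Type*} [Ring Λ] [Algebra ℝ Λ] {s : Set Λ}
    (hanti : ∀ a ∈ s, ∀ b ∈ s, a * b = -(b * a)) {a : Λ} (ha : a ∈ s) :
    ∀ L : List Λ, (∀ b ∈ L, b ∈ s) → a ∈ L → a * L.prod = 0 := by
  intro L
  induction L with
  | nil => intro _ h; simp at h
  | cons b T ih =>
    intro hL hmem
    rw [List.prod_cons, ← mul_assoc]
    rcases List.mem_cons.mp hmem with rfl | hmemT
    · rw [sq_zero_of_anti (hanti a ha a ha), zero_mul]
    · rw [hanti a ha b (hL b List.mem_cons_self), neg_mul, mul_assoc,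
        ih (fun c hc => hL c (List.mem_cons_of_mem b hc)) hmemT, mul_zero, neg_zero]

theorem list_prod_zero_of_not_nodup {Λ : Type*} [Ring Λ] [Algebra ℝ Λ] {s : Set Λ}
    (hanti : ∀ a ∈ s, ∀ b ∈ s, a * b = -(b * a)) :
    ∀ L : List Λ, (∀ b ∈ L, b ∈ s) → ¬ L.Nodup → L.prod = 0 := by
  intro L
  induction L with
  | nil => intro _ h; simp at h
  | cons b T ih =>
    intro hL hnd
    rw [List.prod_cons]
    rw [List.nodup_cons] at hnd
    push_neg at hnd
    by_cases hb : b ∈ T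
    · exact mul_list_prod_zero hanti (hL b List.mem_cons_self) T
        (fun c hc => hL c (List.mem_cons_of_mem b hc)) hb
    · rw [ih (fun c hc => hL c (List.mem_cons_of_mem b hc)) (hnd hb), mul_zero]

theorem span_range_pow_eq_bot {Λ : Type*} [Ring Λ] [Algebra ℝ Λ]
    {ι : Type*} [Fintype ι] (g : ι → Λ)
    (hanti : ∀ a b, g a * g b = -(g b * g a)) {j : ℕ} (hj : Fintype.card ι < j) :
    (Submodule.span ℝ (Set.range g)) ^ j = ⊥ := by
  rw [Submodule.span_pow, Submodule.span_eq_bot]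
  intro a ha
  rw [Set.mem_pow] at ha
  obtain ⟨f, rfl⟩ := ha
  have hanti' : ∀ a ∈ Set.range g, ∀ b ∈ Set.range g, a * b = -(b * a) := by
    rintro _ ⟨p, rfl⟩ _ ⟨q, rfl⟩; exact hanti p q
  apply list_prod_zero_of_not_nodup hanti'
  · intro b hb
    rw [List.mem_ofFn] at hb
    obtain ⟨i, hi⟩ := hb
    rw [← hi]; exact (f i).2
  · rw [List.nodup_ofFn]
    intro hinj
    choose idx hidx using fun i => (f i).2
    obtain ⟨p, q, hpq, hg⟩ := Fintype.exists_ne_map_eq_of_card_lt idx (by simpa using hj)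
    exact hpq (hinj (show (f p : Λ) = (f q : Λ) by rw [← hidx p, ← hidx q, hg]))

/-! ### Matrix transpose/commutation helpers -/

theorem transpose_mul_comm' {Λ : Type*} [Ring Λ] {α β γ : Type*} [Fintype β]
    (P : Matrix α β Λ) (Q : Matrix β γ Λ)
    (h : ∀ i j k l, Commute (P i j) (Q k l)) : (P * Q)ᵀ = Qᵀ * Pᵀ := by
  ext i j
  simp only [transpose_apply, mul_apply]
  exact Finset.sum_congr rfl fun k _ => (h j k k i).eq

theorem transpose_mul_anti' {Λ : Type*} [Ring Λ] {α β γ : Type*} [Fintype β]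
    (P : Matrix α β Λ) (Q : Matrix β γ Λ)
    (h : ∀ i j k l, P i j * Q k l = -(Q k l * P i j)) : (P * Q)ᵀ = -(Qᵀ * Pᵀ) := by
  ext i j
  simp only [transpose_apply, mul_apply, Matrix.neg_apply]
  rw [← Finset.sum_neg_distrib]
  exact Finset.sum_congr rfl fun k _ => h j k k i

theorem pow_entries_commute {Λ : Type*} [Ring Λ] {ι : Type*} [Fintype ι] [DecidableEq ι]
    (P : Matrix ι ι Λ) (h : ∀ i j a b, Commute (P i j) (P a b)) :
    ∀ k i j a b, Commute ((P ^ k) i j) (P a b) := by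
  intro k
  induction k with
  | zero =>
    intro i j a b
    rw [pow_zero, Matrix.one_apply]
    split
    · exact Commute.one_left _
    · exact Commute.zero_left _
  | succ k ih =>
    intro i j a b
    rw [pow_succ, Matrix.mul_apply]
    exact Commute.sum_left _ _ _ fun l _ => (ih i l a b).mul_left (h l j a b)

theorem transpose_pow' {Λ : Type*} [Ring Λ] {ι : Type*} [Fintype ι] [DecidableEq ι]
    (P : Matrix ι ι Λ)
    (h : ∀ i j a b, Commute (P i j) (P a b)) (k : ℕ) : (P ^ k)ᵀ = Pᵀ ^ k := by
  induction k with
  | zero => simp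
  | succ k ih =>
    rw [pow_succ, transpose_mul_comm' _ _ (fun i j a b => pow_entries_commute P h k i j a b),
      ih, ← pow_succ']

theorem mul_pow_swap {Λ : Type*} [Ring Λ] {ι κ : Type*} [Fintype ι] [Fintype κ]
    [DecidableEq ι] [DecidableEq κ]
    (U : Matrix κ ι Λ) (P : Matrix ι ι Λ) (Q : Matrix κ κ Λ)
    (h : U * P = Q * U) (k : ℕ) : U * P ^ k = Q ^ k * U := by
  induction k with
  | zero => simp
  | succ k ih => rw [pow_succ, ← Matrix.mul_assoc, ih, Matrix.mul_assoc, h,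
      ← Matrix.mul_assoc, ← pow_succ]

theorem entries_pow {ι : Type*} [Fintype ι] [DecidableEq ι] {Λ' : Type*}
    [Ring Λ'] [Algebra ℝ Λ'] (P : Matrix ι ι Λ') (U : Submodule ℝ Λ')
    (hP : ∀ i j, P i j ∈ U) : ∀ k i j, (P ^ k) i j ∈ U ^ k := by
  intro k
  induction k with
  | zero =>
    intro i j
    simp only [pow_zero]
    rw [Matrix.one_apply]
    split
    · exact Submodule.one_le.mp le_rfl
    · exact zero_mem _
  | succ k ih =>
    intro i j
    simp only [pow_succ]
    rw [Matrix.mul_apply]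
    exact Submodule.sum_mem _ fun l _ => Submodule.mul_mem_mul (ih i l) (hP l j)

theorem sqrtOneSub_transpose {ι : Type*} [Fintype ι] [DecidableEq ι] {Λ : Type*} [Ring Λ]
    [Algebra ℝ Λ] (K : ℕ) (M : Matrix ι ι Λ)
    (h : ∀ i j a b, Commute (M i j) (M a b)) :
    (sqrtOneSub K M)ᵀ = sqrtOneSub K Mᵀ := by
  rw [sqrtOneSub, sqrtOneSub, Matrix.transpose_sum]
  refine Finset.sum_congr rfl fun k _ => ?_
  rw [Matrix.transpose_smul,
    transpose_pow' (-M) (fun i j a b => ((h i j a b).neg_left.neg_right)) k,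
    Matrix.transpose_neg]

theorem sqrtOneSub_swap {ι κ : Type*} [Fintype ι] [Fintype κ] [DecidableEq ι] [DecidableEq κ]
    {Λ : Type*} [Ring Λ] [Algebra ℝ Λ]
    (U : Matrix κ ι Λ) (P : Matrix ι ι Λ) (Q : Matrix κ κ Λ)
    (h : U * P = Q * U) (K : ℕ) :
    U * sqrtOneSub K P = sqrtOneSub K Q * U := by
  rw [sqrtOneSub, sqrtOneSub, Matrix.mul_sum, Matrix.sum_mul]
  refine Finset.sum_congr rfl fun k _ => ?_
  rw [Matrix.mul_smul, Matrix.smul_mul,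
    mul_pow_swap U (-P) (-Q) (by rw [Matrix.mul_neg, h, Matrix.neg_mul]) k]

theorem span_anti {Λ : Type*} [Ring Λ] [Algebra ℝ Λ] {ι : Type*} (g : ι → Λ)
    (h : ∀ a b, g a * g b = -(g b * g a)) :
    ∀ a ∈ Submodule.span ℝ (Set.range g), ∀ b ∈ Submodule.span ℝ (Set.range g),
      a * b = -(b * a) := by
  have hgen : ∀ p, ∀ b ∈ Submodule.span ℝ (Set.range g), g p * b = -(b * g p) := by
    intro p b hb
    induction hb using Submodule.span_induction with
    | mem c hc => obtain ⟨q, rfl⟩ := hc; exact h p q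
    | zero => simp
    | add u v _ _ ihu ihv => rw [mul_add, ihu, ihv, add_mul, neg_add]
    | smul r u _ ihu => rw [mul_smul_comm, ihu, smul_neg, smul_mul_assoc]
  intro a ha b hb
  induction ha using Submodule.span_induction with
  | mem c hc => obtain ⟨q, rfl⟩ := hc; exact hgen q b hb
  | zero => simp
  | add u v _ _ ihu ihv => rw [add_mul, ihu, ihv, mul_add, neg_add]
  | smul r u _ ihu => rw [smul_mul_assoc, ihu, mul_smul_comm, smul_neg]

theorem odd_pair_central {Λ : Type*} [Ring Λ] {u v p : Λ}
    (hup : u * p = -(p * u)) (hvp : v * p = -(p * v)) : (u * v) * p = p * (u * v) := by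
  calc (u * v) * p = u * (v * p) := mul_assoc u v p
    _ = -(u * p * v) := by rw [hvp, mul_neg, mul_assoc]
    _ = p * (u * v) := by rw [hup, neg_mul, neg_neg, mul_assoc]

theorem spanVV_comm {Λ : Type*} [Ring Λ] [Algebra ℝ Λ] {ι : Type*} (g : ι → Λ)
    (h : ∀ a b, g a * g b = -(g b * g a)) :
    ∀ a ∈ Submodule.span ℝ (Set.range g) * Submodule.span ℝ (Set.range g),
    ∀ b ∈ Submodule.span ℝ (Set.range g) * Submodule.span ℝ (Set.range g),
      Commute a b := by
  have hanti := span_anti g h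
  intro a ha b hb
  refine Submodule.mul_induction_on ha (fun u hu v hv => ?_) (fun p q hp hq => hp.add_left hq)
  refine Submodule.mul_induction_on hb (fun p hp q hq => ?_) (fun p q hp hq => hp.add_right hq)
  show (u * v) * (p * q) = (p * q) * (u * v)
  have h1 : (u * v) * p = p * (u * v) :=
    odd_pair_central (hanti u hu p hp) (hanti v hv p hp)
  have h2 : (u * v) * q = q * (u * v) :=
    odd_pair_central (hanti u hu q hq) (hanti v hv q hq)
  calc (u * v) * (p * q) = ((u * v) * p) * q := (mul_assoc _ _ _).symm
    _ = p * ((u * v) * q) := by rw [h1, mul_assoc]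
    _ = (p * q) * (u * v) := by rw [h2, mul_assoc]

end OspAux

/-- with `x` orthogonal and `y` symplectic (with central, i.e. "even
scalar", entries), `θ` a matrix of odd anticommuting elements, `θ̂ = θᵀJ`,
`A = √(I_m − θ̂θ)`, `B = √(I_{2n} − θθ̂)`, the block matrix with blocks
`xA, xθ̂y, θ, By` satisfies the three orthosymplectic relations. -/
theorem osp_embedding_relations (m n : ℕ) (Λ : Type*) [Ring Λ] [Algebra ℝ Λ]
    (x : Matrix (Fin m) (Fin m) Λ)
    (y : Matrix (Fin n ⊕ Fin n) (Fin n ⊕ Fin n) Λ)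
    (θ : Matrix (Fin n ⊕ Fin n) (Fin m) Λ)
    (hxc : ∀ i j (c : Λ), Commute (x i j) c)
    (hyc : ∀ i j (c : Λ), Commute (y i j) c)
    (hx : xᵀ * x = 1)
    (hy : yᵀ * sympJ n Λ * y = sympJ n Λ)
    (hodd : ∀ i j k l, θ i j * θ k l = -(θ k l * θ i j)) :
    ∀ A B, A = sqrtOneSub (n * m + 1) ((θᵀ * sympJ n Λ) * θ) →
      B = sqrtOneSub (n * m + 1) (θ * (θᵀ * sympJ n Λ)) →
      (x * A)ᵀ * (x * A) + θᵀ * sympJ n Λ * θ = 1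
      ∧ -((x * A)ᵀ * (x * (θᵀ * sympJ n Λ) * y)) + θᵀ * sympJ n Λ * (B * y) = 0
      ∧ -((x * (θᵀ * sympJ n Λ) * y)ᵀ * (x * (θᵀ * sympJ n Λ) * y))
          + (B * y)ᵀ * sympJ n Λ * (B * y) = sympJ n Λ := by
  open OspAux in
  intro A B hA hB
  set J' : Matrix (Fin n ⊕ Fin n) (Fin n ⊕ Fin n) Λ := sympJ n Λ with hJ'
  set θh : Matrix (Fin m) (Fin n ⊕ Fin n) Λ := θᵀ * J' with hθhdef
  -- basic facts about J'
  have hJval : ∀ a b, J' a b = 0 ∨ J' a b = 1 ∨ J' a b = -1 := by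
    rintro (a | a) (b | b)
    · left; simp [hJ', sympJ]
    · by_cases h : a = b
      · right; left; simp [hJ', sympJ, Matrix.one_apply, h]
      · left; simp [hJ', sympJ, Matrix.one_apply, h]
    · by_cases h : a = b
      · right; right; simp [hJ', sympJ, Matrix.one_apply, h]
      · left; simp [hJ', sympJ, Matrix.one_apply, h]
    · left; simp [hJ', sympJ]
  have hJc : ∀ a b (c : Λ), Commute (J' a b) c := by
    intro a b c
    rcases hJval a b with h | h | h <;> rw [h]
    · exact Commute.zero_left _
    · exact Commute.one_left _
    · exact (Commute.one_left _).neg_left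
  have hJT : J'ᵀ = -J' := by
    ext (a | a) (b | b) <;>
      simp [hJ', sympJ, Matrix.one_apply, Matrix.fromBlocks, Matrix.neg_apply, eq_comm]
  -- the span of the odd entries
  set g : (Fin n ⊕ Fin n) × Fin m → Λ := fun p => θ p.1 p.2 with hg
  set V : Submodule ℝ Λ := Submodule.span ℝ (Set.range g) with hV
  have hganti : ∀ a b, g a * g b = -(g b * g a) := fun a b => hodd a.1 a.2 b.1 b.2
  have hθV : ∀ i j, θ i j ∈ V := fun i j => Submodule.subset_span ⟨(i, j), rfl⟩
  have hθhV : ∀ i j, θh i j ∈ V := by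
    intro i j
    rw [hθhdef, Matrix.mul_apply]
    refine Submodule.sum_mem _ fun k _ => ?_
    rw [Matrix.transpose_apply]
    rcases hJval k j with h | h | h <;> rw [h]
    · rw [mul_zero]; exact zero_mem _
    · rw [mul_one]; exact hθV k i
    · rw [mul_neg_one]; exact neg_mem (hθV k i)
  have hVanti := span_anti g hganti
  have hWcomm := spanVV_comm g hganti
  -- entries of M = θh*θ and N = θ*θh lie in V*V
  have hMW : ∀ i j, (θh * θ) i j ∈ V * V := by
    intro i j
    rw [Matrix.mul_apply]
    exact Submodule.sum_mem _ fun k _ => Submodule.mul_mem_mul (hθhV i k) (hθV k j)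
  have hNW : ∀ i j, (θ * θh) i j ∈ V * V := by
    intro i j
    rw [Matrix.mul_apply]
    exact Submodule.sum_mem _ fun k _ => Submodule.mul_mem_mul (hθV i k) (hθhV k j)
  have hMcomm : ∀ i j a b, Commute ((θh * θ) i j) ((θh * θ) a b) :=
    fun i j a b => hWcomm _ (hMW i j) _ (hMW a b)
  have hNcomm : ∀ i j a b, Commute ((θ * θh) i j) ((θ * θh) a b) :=
    fun i j a b => hWcomm _ (hNW i j) _ (hNW a b)
  -- nilpotency
  have hcard : Fintype.card ((Fin n ⊕ Fin n) × Fin m) < 2 * (n * m + 1) := by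
    simp only [Fintype.card_prod, Fintype.card_sum, Fintype.card_fin]
    have : (n + n) * m = 2 * (n * m) := by ring
    omega
  have hVbot : V ^ (2 * (n * m + 1)) = ⊥ := by
    rw [hV]; exact span_range_pow_eq_bot g hganti hcard
  have hMK : (θh * θ) ^ (n * m + 1) = 0 := by
    ext i j
    have h1 := entries_pow (θh * θ) (V * V) hMW (n * m + 1) i j
    rw [← pow_two, ← pow_mul, hVbot] at h1
    simpa using h1
  have hNK : (θ * θh) ^ (n * m + 1) = 0 := by
    ext i j
    have h1 := entries_pow (θ * θh) (V * V) hNW (n * m + 1) i j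
    rw [← pow_two, ← pow_mul, hVbot] at h1
    simpa using h1
  -- squares
  have hA2 : A * A = 1 - θh * θ := by rw [hA]; exact sqrtOneSub_sq _ _ hMK
  have hB2 : B * B = 1 - θ * θh := by rw [hB]; exact sqrtOneSub_sq _ _ hNK
  -- transposes
  have hθhT : θhᵀ = J'ᵀ * θ := by
    rw [hθhdef, transpose_mul_comm' θᵀ J' (fun i j k l => (hJc k l _).symm),
      transpose_transpose]
  have hMT : (θh * θ)ᵀ = θh * θ := by
    rw [transpose_mul_anti' θh θ (fun i j k l => hVanti _ (hθhV i j) _ (hθV k l)),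
      hθhT, hJT]
    rw [Matrix.neg_mul, Matrix.mul_neg, neg_neg, hθhdef, Matrix.mul_assoc]
  have hAT : Aᵀ = A := by
    rw [hA, sqrtOneSub_transpose _ _ hMcomm, hMT]
  have hθθT : (θ * θᵀ)ᵀ = -(θ * θᵀ) := by
    have h := transpose_mul_anti' θ θᵀ (fun i j k l => hodd i j l k)
    rwa [transpose_transpose] at h
  have hNTJ : (θ * θh)ᵀ * J' = J' * (θ * θh) := by
    have h4 : (θ * θh)ᵀ = J' * (θ * θᵀ) := by
      rw [hθhdef, ← Matrix.mul_assoc,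
        transpose_mul_comm' (θ * θᵀ) J' (fun i j k l => (hJc k l _).symm),
        hθθT, hJT, Matrix.neg_mul, Matrix.mul_neg, neg_neg]
    rw [h4, hθhdef]
    simp only [Matrix.mul_assoc]
  have hBT : Bᵀ * J' = J' * B := by
    rw [hB, sqrtOneSub_transpose _ _ hNcomm]
    exact (sqrtOneSub_swap J' (θ * θh) ((θ * θh)ᵀ) hNTJ.symm _).symm
  have hθhB : θh * B = A * θh := by
    rw [hA, hB]
    exact sqrtOneSub_swap θh (θ * θh) (θh * θ) (Matrix.mul_assoc θh θ θh).symm _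
  have hxAT : (x * A)ᵀ = A * xᵀ := by
    rw [transpose_mul_comm' x A (fun i j k l => hxc i j _), hAT]
  refine ⟨?_, ?_, ?_⟩
  · -- relation 1
    rw [hxAT, Matrix.mul_assoc A xᵀ (x * A), ← Matrix.mul_assoc xᵀ x A, hx,
      Matrix.one_mul, hA2, sub_add_cancel]
  · -- relation 2
    rw [hxAT]
    have h5 : A * xᵀ * (x * θh * y) = A * θh * y := by
      rw [← Matrix.mul_assoc (A * xᵀ) (x * θh) y, Matrix.mul_assoc A xᵀ (x * θh),
        ← Matrix.mul_assoc xᵀ x θh, hx, Matrix.one_mul]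
    rw [h5, ← Matrix.mul_assoc θh B y, hθhB, neg_add_cancel]
  · -- relation 3
    have hyT : ∀ (P : Matrix (Fin m) (Fin n ⊕ Fin n) Λ), (P * y)ᵀ = yᵀ * Pᵀ :=
      fun P => transpose_mul_comm' P y (fun i j k l => (hyc k l _).symm)
    have hyT2 : ∀ (P : Matrix (Fin n ⊕ Fin n) (Fin n ⊕ Fin n) Λ), (P * y)ᵀ = yᵀ * Pᵀ :=
      fun P => transpose_mul_comm' P y (fun i j k l => (hyc k l _).symm)
    have hterm1 : (x * θh * y)ᵀ * (x * θh * y) = -(yᵀ * (J' * (θ * θh)) * y) := by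
      rw [hyT (x * θh), transpose_mul_comm' x θh (fun i j k l => hxc i j _)]
      have e1 : yᵀ * (θhᵀ * xᵀ) * (x * θh * y)
          = yᵀ * ((θhᵀ * (xᵀ * x)) * θh) * y := by
        simp only [Matrix.mul_assoc]
      rw [e1, hx, Matrix.mul_one, hθhT, hJT, hθhdef]
      simp only [Matrix.neg_mul, Matrix.mul_neg, Matrix.mul_assoc]
    have hterm2 : (B * y)ᵀ * J' * (B * y) = J' - yᵀ * (J' * (θ * θh)) * y := by
      rw [hyT2 B]
      have e2 : yᵀ * Bᵀ * J' * (B * y) = yᵀ * ((Bᵀ * J') * (B * y)) := by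
        simp only [Matrix.mul_assoc]
      rw [e2, hBT]
      have e3 : yᵀ * ((J' * B) * (B * y)) = yᵀ * (J' * ((B * B) * y)) := by
        simp only [Matrix.mul_assoc]
      rw [e3, hB2, Matrix.sub_mul, Matrix.one_mul, Matrix.mul_sub, Matrix.mul_sub,
        ← Matrix.mul_assoc yᵀ J' y, hy]
      congr 1
      simp only [Matrix.mul_assoc]
    rw [hterm1, hterm2, neg_neg]
    abel
end
end

section
/- Let N = I − M where M is an m×m matrix with nilpotent entries generated by finitely many pairwise-anticommuting odd variables (so every entry of M is nilpotent and tr(Mᵏ) vanishes for large k). Then det(I − M) = exp(−Σ_{k≥1} tr(Mᵏ)/k), where the sum is finite by nilpotency. -/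
noncomputable section

open Matrix Polynomial Finset

section Aux

variable {R : Type*} [CommRing R]

lemma derivative_finset_prod' {ι : Type*} [DecidableEq ι] (s : Finset ι) (f : ι → R[X]) :
    derivative (∏ i ∈ s, f i) = ∑ i ∈ s, (∏ j ∈ s.erase i, f j) * derivative (f i) := by
  induction s using Finset.induction_on with
  | empty => simp
  | @insert a s ha ih =>
    rw [Finset.prod_insert ha, derivative_mul, ih, Finset.sum_insert ha, Finset.erase_insert ha,
      Finset.mul_sum, mul_comm (derivative (f a))]
    congr 1
    refine Finset.sum_congr rfl fun i hi => ?_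
    rw [Finset.erase_insert_of_ne (by rintro rfl; exact ha hi),
      Finset.prod_insert (fun h => ha (Finset.mem_of_mem_erase h)), mul_assoc]

variable {n : Type*} [Fintype n] [DecidableEq n]

lemma derivative_det_eq_sum (N : Matrix n n R[X]) :
    derivative N.det = ∑ j, (N.updateCol j fun i => derivative (N i j)).det := by
  simp only [det_apply']
  rw [map_sum]
  have h1 : ∀ σ : Equiv.Perm n,
      derivative (((Equiv.Perm.sign σ : ℤ) : R[X]) * ∏ i, N (σ i) i)
        = ∑ j, ((Equiv.Perm.sign σ : ℤ) : R[X]) *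
            ((∏ i ∈ Finset.univ.erase j, N (σ i) i) * derivative (N (σ j) j)) := by
    intro σ
    rw [derivative_mul, derivative_intCast, zero_mul, zero_add, derivative_finset_prod',
      Finset.mul_sum]
  simp only [h1]
  rw [Finset.sum_comm]
  refine Finset.sum_congr rfl fun j _ => Finset.sum_congr rfl fun σ _ => ?_
  congr 1
  rw [← Finset.mul_prod_erase Finset.univ _ (Finset.mem_univ j)]
  rw [Matrix.updateCol_apply, if_pos rfl, mul_comm]
  congr 1
  refine Finset.prod_congr rfl fun i hi => ?_
  rw [Matrix.updateCol_apply, if_neg (Finset.ne_of_mem_erase hi)]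

lemma derivative_det_eq_trace (N : Matrix n n R[X]) :
    derivative N.det = Matrix.trace (adjugate N * N.map derivative) := by
  rw [derivative_det_eq_sum, Matrix.trace]
  refine Finset.sum_congr rfl fun j _ => ?_
  have h : (N.updateCol j fun i => derivative (N i j)).det
      = cramer N (fun i => derivative (N i j)) j := (cramer_apply N _ j).symm
  rw [h, cramer_eq_adjugate_mulVec]
  simp [Matrix.mulVec, dotProduct, Matrix.mul_apply, Matrix.diag, Matrix.map_apply]

/-- Uniqueness for the linear ODE `H' = -(U*H)`, `H(0)=0` over a `ℚ`-algebra. -/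
lemma ode_unique_zero {S : Type*} [CommRing S] [Algebra ℚ S] (U H : S[X])
    (hd : derivative H = -(U * H)) (h0 : H.coeff 0 = 0) : H = 0 := by
  suffices h : ∀ n, H.coeff n = 0 by
    ext n; simp [h n]
  intro n
  induction n using Nat.strong_induction_on with
  | _ n ih =>
    match n with
    | 0 => exact h0
    | Nat.succ k =>
      have h1 : H.coeff (k + 1) * ((k : S) + 1) = (derivative H).coeff k :=
        (coeff_derivative H k).symm
      rw [hd] at h1
      have h2 : (-(U * H)).coeff k = 0 := by
        rw [coeff_neg, coeff_mul]
        rw [Finset.sum_eq_zero, neg_zero]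
        intro p hp
        have hp2 : p.2 < k + 1 := by
          have := Finset.HasAntidiagonal.mem_antidiagonal.mp hp
          omega
        rw [ih p.2 hp2, mul_zero]
      rw [h2] at h1
      have hcast : ((k : S) + 1) = algebraMap ℚ S ((k : ℚ) + 1) := by
        rw [_root_.map_add, _root_.map_one, map_natCast]
      have hk : ((k : ℚ) + 1) ≠ 0 := by positivity
      rw [hcast] at h1
      calc H.coeff (k + 1)
          = H.coeff (k + 1) * (algebraMap ℚ S ((k : ℚ) + 1) * algebraMap ℚ S ((k : ℚ) + 1)⁻¹) := by
            rw [← _root_.map_mul, mul_inv_cancel₀ hk, _root_.map_one, mul_one]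
        _ = (H.coeff (k + 1) * algebraMap ℚ S ((k : ℚ) + 1)) * algebraMap ℚ S ((k : ℚ) + 1)⁻¹ := by
            ring
        _ = 0 := by rw [h1, zero_mul]

lemma qsmul_nat_cancel {S : Type*} [CommRing S] [Algebra ℚ S] (k : ℕ) (p : S) :
    ((1 : ℚ) / (k + 1)) • (((k + 1 : ℕ) : S) * p) = p := by
  rw [← nsmul_eq_mul, ← Nat.cast_smul_eq_nsmul ℚ, smul_smul]
  rw [show (1 : ℚ) / (k + 1) * ((k + 1 : ℕ) : ℚ) = 1 by
    push_cast
    field_simp]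
  rw [one_smul]

lemma qsmul_fact_cancel {S : Type*} [CommRing S] [Algebra ℚ S] (k : ℕ) (p : S) :
    ((1 : ℚ) / (Nat.factorial (k + 1))) • (((k + 1 : ℕ) : S) * p)
      = ((1 : ℚ) / (Nat.factorial k)) • p := by
  rw [← nsmul_eq_mul, ← Nat.cast_smul_eq_nsmul ℚ, smul_smul]
  congr 1
  rw [Nat.factorial_succ]
  have h1 : ((k + 1 : ℕ) : ℚ) ≠ 0 := by positivity
  have h2 : ((Nat.factorial k : ℕ) : ℚ) ≠ 0 := by
    exact_mod_cast Nat.cast_ne_zero.mpr (Nat.factorial_ne_zero k)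
  push_cast
  field_simp

lemma sum_neg_helper {Λ : Type*} [CommRing Λ] [Algebra ℚ Λ] (T U : Λ[X]) (E : ℕ) :
    ∑ i ∈ Finset.range E, ((1 : ℚ) / (Nat.factorial i)) • ((-T) ^ i * -U)
      = -∑ j ∈ Finset.range E, U * (((1 : ℚ) / (Nat.factorial j)) • (-T) ^ j) := by
  rw [← Finset.sum_neg_distrib]
  refine Finset.sum_congr rfl fun i _ => ?_
  rw [mul_smul_comm, ← smul_neg]
  congr 1
  ring

end Aux

/-- if `M` is an `m × m` matrix whose entries lie in an ideal `I`
with `I ^ D = ⊥` (the nilpotent ideal generated by finitely many odd variables,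
so all traces `tr(Mᵏ)` with `k ≥ D` vanish and all sums terminate), then
`det(I − M) = exp(−Σ_{k≥1} tr(Mᵏ)/k)`, both series being finite. -/
theorem det_one_sub_eq_exp_neg_sum_trace (m D : ℕ) (Λ : Type*) [CommRing Λ]
    [Algebra ℚ Λ] (M : Matrix (Fin m) (Fin m) Λ)
    (I : Ideal Λ) (hI : I ^ D = ⊥) (hM : ∀ i j, M i j ∈ I) :
    Matrix.det (1 - M)
      = ∑ j ∈ Finset.range D, ((1 : ℚ) / (Nat.factorial j)) •
          (-(∑ k ∈ Finset.range D, ((1 : ℚ) / (k + 1)) • Matrix.trace (M ^ (k + 1)))) ^ j := by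
  classical
  rcases Nat.eq_zero_or_pos D with hD0 | hD0
  · subst hD0
    have h1 : (1 : Λ) = 0 := by
      have h : (1 : Λ) ∈ I ^ 0 := by
        rw [pow_zero, Ideal.one_eq_top]
        exact Submodule.mem_top
      rw [hI] at h
      simpa using h
    haveI : Subsingleton Λ := subsingleton_of_zero_eq_one h1.symm
    exact Subsingleton.elim _ _
  obtain ⟨E, rfl⟩ : ∃ E, D = E + 1 := ⟨D - 1, by omega⟩
  -- entries of powers of `M`
  have hpow : ∀ (k : ℕ) (i j : Fin m), (M ^ k) i j ∈ I ^ k := by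
    intro k
    induction k with
    | zero =>
      intro i j
      rw [pow_zero, Ideal.one_eq_top]
      exact Submodule.mem_top
    | succ k ih =>
      intro i j
      rw [pow_succ, pow_succ, Matrix.mul_apply]
      exact Ideal.sum_mem _ fun l _ => Ideal.mul_mem_mul (ih i l) (hM l j)
  have htrI : ∀ k : ℕ, Matrix.trace (M ^ (k + 1)) ∈ I := by
    intro k
    refine Ideal.pow_le_self (Nat.succ_ne_zero k) ?_
    exact Ideal.sum_mem _ fun l _ => hpow (k + 1) l l
  have hMD : M ^ (E + 1) = 0 := by
    ext i j
    have h := hpow (E + 1) i j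
    rw [hI] at h
    simpa using h
  -- the polynomial-matrix setup
  set Mp : Matrix (Fin m) (Fin m) Λ[X] := (C : Λ →+* Λ[X]).mapMatrix M with hMp
  have hMpD : Mp ^ (E + 1) = 0 := by
    rw [hMp, ← map_pow, hMD, map_zero]
  have htrMp : ∀ k : ℕ, Matrix.trace (Mp ^ k) = C (Matrix.trace (M ^ k)) := by
    intro k
    rw [hMp, ← map_pow]
    simp [Matrix.trace, Matrix.diag, RingHom.mapMatrix_apply, Matrix.map_apply]
  have hMpe : ∀ i j, Mp i j = C (M i j) := fun i j => rfl
  set A : Matrix (Fin m) (Fin m) Λ[X] := 1 - (X : Λ[X]) • Mp with hA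
  set F : Λ[X] := A.det with hF
  set U : Λ[X] := ∑ k ∈ Finset.range (E + 1), C (Matrix.trace (M ^ (k + 1))) * X ^ k with hU
  set T : Λ[X] := ∑ k ∈ Finset.range (E + 1),
      ((1 : ℚ) / (k + 1)) • (C (Matrix.trace (M ^ (k + 1))) * X ^ (k + 1)) with hT
  set G : Λ[X] := ∑ j ∈ Finset.range (E + 1),
      ((1 : ℚ) / (Nat.factorial j)) • (-T) ^ j with hG
  -- ideal of polynomials with coefficients in I
  set J : Ideal Λ[X] := I.map (C : Λ →+* Λ[X]) with hJ
  have hJD : J ^ (E + 1) = ⊥ := by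
    rw [hJ, ← Ideal.map_pow, hI, Ideal.map_bot]
  have hsmul_mem : ∀ (q : ℚ) (p : Λ[X]), p ∈ J → q • p ∈ J := by
    intro q p hp
    rw [Algebra.smul_def]
    exact Ideal.mul_mem_left _ _ hp
  have hTJ : T ∈ J := by
    refine Ideal.sum_mem _ fun k _ => hsmul_mem _ _ ?_
    exact Ideal.mul_mem_right _ _ (Ideal.mem_map_of_mem _ (htrI k))
  have hUJ : U ∈ J := by
    refine Ideal.sum_mem _ fun k _ => ?_
    exact Ideal.mul_mem_right _ _ (Ideal.mem_map_of_mem _ (htrI k))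
  have hUT : U * (-T) ^ E = 0 := by
    have h : U * (-T) ^ E ∈ J ^ (E + 1) := by
      rw [pow_succ']
      exact Ideal.mul_mem_mul hUJ (Ideal.pow_mem_pow (neg_mem hTJ) E)
    rw [hJD] at h
    simpa using h
  -- derivative of T
  have hT' : derivative T = U := by
    rw [hT, hU, map_sum]
    refine Finset.sum_congr rfl fun k _ => ?_
    rw [derivative_smul, derivative_mul, derivative_C, zero_mul, zero_add, derivative_X_pow]
    have hre : C (Matrix.trace (M ^ (k + 1))) * (C ((k + 1 : ℕ) : Λ) * X ^ (k + 1 - 1))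
        = ((k + 1 : ℕ) : Λ[X]) * (C (Matrix.trace (M ^ (k + 1))) * X ^ k) := by
      rw [Nat.add_sub_cancel, map_natCast C]
      ring
    rw [hre, qsmul_nat_cancel]
  -- derivative of G
  have hG' : derivative G = -(U * G) := by
    rw [hG, map_sum, Finset.sum_range_succ' _ E]
    have h0 : ((1 : ℚ) / (Nat.factorial 0)) • (-T) ^ 0 = (1 : Λ[X]) := by
      simp
    rw [show derivative (((1 : ℚ) / (Nat.factorial 0)) • (-T) ^ 0) = 0 by
      rw [h0]; exact derivative_one]
    rw [add_zero]
    have hterm : ∀ i : ℕ,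
        derivative (((1 : ℚ) / (Nat.factorial (i + 1))) • (-T) ^ (i + 1))
          = ((1 : ℚ) / (Nat.factorial i)) • ((-T) ^ i * (-U)) := by
      intro i
      rw [derivative_smul, derivative_pow]
      have hd : derivative (-T) = -U := by rw [map_neg, hT']
      rw [hd]
      have hre : C ((i + 1 : ℕ) : Λ) * (-T) ^ (i + 1 - 1) * -U
          = ((i + 1 : ℕ) : Λ[X]) * ((-T) ^ i * (-U)) := by
        rw [Nat.add_sub_cancel, map_natCast C]
        ring
      rw [hre, qsmul_fact_cancel]
    rw [Finset.sum_congr rfl fun i _ => hterm i]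
    have hlast : U * (((1 : ℚ) / (Nat.factorial E)) • (-T) ^ E) = 0 := by
      rw [mul_smul_comm, hUT, smul_zero]
    have hsplit : U * ∑ j ∈ Finset.range (E + 1), ((1 : ℚ) / (Nat.factorial j)) • (-T) ^ j
        = ∑ j ∈ Finset.range E, U * (((1 : ℚ) / (Nat.factorial j)) • (-T) ^ j) := by
      rw [Finset.sum_range_succ, mul_add, hlast, add_zero, Finset.mul_sum]
    rw [hsplit]
    exact sum_neg_helper T U E
  -- derivative of F
  have hAd : A.map derivative = -Mp := by
    ext i j
    rw [hA]
    simp only [Matrix.map_apply, Matrix.sub_apply, Matrix.smul_apply, Matrix.neg_apply,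
      smul_eq_mul]
    rw [map_sub, derivative_mul, derivative_X, one_mul]
    have : derivative ((1 : Matrix (Fin m) (Fin m) Λ[X]) i j) = 0 := by
      rw [Matrix.one_apply]
      split_ifs <;> simp
    rw [this, zero_sub]
    have : derivative (Mp i j) = 0 := by
      rw [hMp]
      simp [RingHom.mapMatrix_apply, Matrix.map_apply]
    rw [this, mul_zero, add_zero]
  have hadj : ∀ K : ℕ, adjugate A
      = (∑ k ∈ Finset.range K, (F * (X : Λ[X]) ^ k) • Mp ^ k)
        + ((X : Λ[X]) ^ K) • (Mp ^ K * adjugate A) := by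
    intro K
    induction K with
    | zero => simp
    | succ K ih =>
      have h0 : adjugate A = F • 1 + (X : Λ[X]) • (Mp * adjugate A) := by
        have h : A * adjugate A = F • 1 := by rw [Matrix.mul_adjugate, hF]
        have h2 : A * adjugate A = adjugate A - (X : Λ[X]) • (Mp * adjugate A) := by
          rw [hA, sub_mul, one_mul, Matrix.smul_mul]
        rw [h2] at h
        exact eq_add_of_sub_eq h
      calc adjugate A
          = (∑ k ∈ Finset.range K, (F * (X : Λ[X]) ^ k) • Mp ^ k)
              + ((X : Λ[X]) ^ K) • (Mp ^ K * adjugate A) := ih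
        _ = (∑ k ∈ Finset.range (K + 1), (F * (X : Λ[X]) ^ k) • Mp ^ k)
              + ((X : Λ[X]) ^ (K + 1)) • (Mp ^ (K + 1) * adjugate A) := by
            rw [Finset.sum_range_succ, add_assoc]
            congr 1
            conv_lhs => rw [h0]
            rw [Matrix.mul_add, Matrix.mul_smul, Matrix.mul_one, smul_add]
            congr 1
            · rw [smul_smul, mul_comm ((X : Λ[X]) ^ K) F]
            · rw [Matrix.mul_smul, smul_smul, ← pow_succ, ← Matrix.mul_assoc, ← pow_succ]
  have hadjE : adjugate A = ∑ k ∈ Finset.range (E + 1), (F * (X : Λ[X]) ^ k) • Mp ^ k := by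
    rw [hadj (E + 1), hMpD, Matrix.zero_mul, smul_zero, add_zero]
  have hF' : derivative F = -(U * F) := by
    have h1 : derivative F = Matrix.trace (adjugate A * A.map derivative) := by
      rw [hF]
      exact derivative_det_eq_trace A
    rw [h1, hAd, hadjE, Finset.sum_mul, Matrix.trace_sum, hU, Finset.sum_mul,
      ← Finset.sum_neg_distrib]
    refine Finset.sum_congr rfl fun k _ => ?_
    rw [Matrix.smul_mul, Matrix.trace_smul, Matrix.mul_neg, ← pow_succ, Matrix.trace_neg,
      htrMp, smul_eq_mul]
    ring
  -- coefficient 0 of F and G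
  have hF0 : F.coeff 0 = 1 := by
    rw [Polynomial.coeff_zero_eq_eval_zero, hF]
    have h2 : (A.det).eval 0 = (A.map (evalRingHom (0 : Λ))).det := by
      have h4 := RingHom.map_det (evalRingHom (0 : Λ)) A
      rw [RingHom.mapMatrix_apply] at h4
      simpa using h4
    rw [h2]
    have h3 : A.map (evalRingHom (0 : Λ)) = 1 := by
      ext i j
      rw [Matrix.map_apply, hA, Matrix.sub_apply, Matrix.smul_apply, hMpe, smul_eq_mul]
      simp [Matrix.one_apply, apply_ite (eval (0 : Λ))]
    rw [h3, det_one]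
  have hT0 : T.eval 0 = 0 := by
    rw [hT, Polynomial.eval_finset_sum]
    refine Finset.sum_eq_zero fun k _ => ?_
    rw [Polynomial.eval_smul, Polynomial.eval_mul, Polynomial.eval_pow, Polynomial.eval_X,
      zero_pow (Nat.succ_ne_zero k), mul_zero, smul_zero]
  have hG0 : G.coeff 0 = 1 := by
    rw [Polynomial.coeff_zero_eq_eval_zero, hG, Polynomial.eval_finset_sum]
    rw [Finset.sum_eq_single_of_mem 0 (Finset.mem_range.mpr (Nat.succ_pos E))]
    · simp
    · intro j _ hj
      rw [Polynomial.eval_smul, Polynomial.eval_pow, Polynomial.eval_neg, hT0, neg_zero,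
        zero_pow hj, smul_zero]
  -- ODE uniqueness gives F = G
  have hFG : F = G := by
    have h4 : F - G = 0 := by
      apply ode_unique_zero U
      · rw [map_sub, hF', hG']
        ring
      · rw [Polynomial.coeff_sub, hF0, hG0, sub_self]
    exact sub_eq_zero.mp h4
  -- evaluate at 1
  have hL : (1 - M).det = F.eval 1 := by
    rw [hF]
    have h2 : (A.det).eval 1 = (A.map (evalRingHom (1 : Λ))).det := by
      have h4 := RingHom.map_det (evalRingHom (1 : Λ)) A
      rw [RingHom.mapMatrix_apply] at h4
      simpa using h4
    rw [h2]
    congr 1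
    ext i j
    simp only [Matrix.map_apply, hA, Matrix.sub_apply, Matrix.smul_apply, smul_eq_mul, hMpe]
    simp [Matrix.one_apply, apply_ite (eval (1 : Λ))]
  have hTS : T.eval 1
      = ∑ k ∈ Finset.range (E + 1), ((1 : ℚ) / (k + 1)) • Matrix.trace (M ^ (k + 1)) := by
    rw [hT, Polynomial.eval_finset_sum]
    refine Finset.sum_congr rfl fun k _ => ?_
    rw [Polynomial.eval_smul, Polynomial.eval_mul, Polynomial.eval_pow, Polynomial.eval_X,
      Polynomial.eval_C, one_pow, mul_one]
  rw [hL, hFG, hG, Polynomial.eval_finset_sum]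
  refine Finset.sum_congr rfl fun j _ => ?_
  rw [Polynomial.eval_smul, Polynomial.eval_pow, Polynomial.eval_neg, hTS]
end
end

section
/- Let θ = (θᵢⱼ) be a 2n×m matrix of independent Grassmann generators of Λ_{2mn}, and θ̂ = θᵀJ. Then for all 1 ≤ i ≤ 2n and 1 ≤ j ≤ m, the (left) Grassmann partial derivative satisfies ∂_{θᵢⱼ} det(I_m − θ̂θ) = 2 ((I_m − θ̂θ)^{-1} θ̂)_{ji} · det(I_m − θ̂θ). -/
noncomputable section

open Matrix

/-- The determinant of a square matrix over a (possibly noncommutative) ring,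
via the Leibniz formula with ordered products.  For matrices whose entries
pairwise commute (such as even elements of a Grassmann algebra) this is the
usual determinant. -/
def ncDet {m : ℕ} {Λ : Type*} [Ring Λ] (M : Matrix (Fin m) (Fin m) Λ) : Λ :=
  ∑ σ : Equiv.Perm (Fin m),
    (Equiv.Perm.sign σ : ℤ) • ((List.finRange m).map fun i => M (σ i) i).prod

section CommDet
variable {R Λ : Type*} [CommRing R] [Ring Λ]

lemma dOne (φ : R →+* Λ) (d : R →+ Λ)
    (hleib : ∀ x y : R, d (x * y) = d x * φ y + φ x * d y) : d 1 = 0 := by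
  have h := hleib 1 1
  rw [mul_one, map_one φ, mul_one, one_mul] at h
  exact (left_eq_add.mp h)

lemma dProd (φ : R →+* Λ) (d : R →+ Λ)
    (hleib : ∀ x y : R, d (x * y) = d x * φ y + φ x * d y)
    (hc : ∀ (x : R) (c : Λ), φ x * c = c * φ x)
    {ι : Type*} [DecidableEq ι] (s : Finset ι) (f : ι → R) :
    d (∏ i ∈ s, f i) = ∑ i ∈ s, φ (∏ j ∈ s.erase i, f j) * d (f i) := by
  induction s using Finset.induction_on with
  | empty => simp [dOne φ d hleib]
  | @insert j s hj ih =>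
    rw [Finset.prod_insert hj, hleib, ih, Finset.sum_insert hj, Finset.erase_insert hj,
      Finset.mul_sum]
    congr 1
    · exact (hc _ _).symm
    · refine Finset.sum_congr rfl fun k hk => ?_
      rw [Finset.erase_insert_of_ne (by rintro rfl; exact hj hk),
        Finset.prod_insert (fun h => hj (Finset.mem_of_mem_erase h)), RingHom.map_mul, mul_assoc]

lemma adj_col {m : ℕ} (A : Matrix (Fin m) (Fin m) R) (k a : Fin m) :
    adjugate A k a = (A.updateCol k (Pi.single a 1)).det := by
  have h1 : adjugate A k a = adjugate Aᵀ a k := by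
    rw [← adjugate_transpose, transpose_apply]
  rw [h1, adjugate_apply, updateRow_transpose, det_transpose]

lemma dDet (φ : R →+* Λ) (d : R →+ Λ)
    (hleib : ∀ x y : R, d (x * y) = d x * φ y + φ x * d y)
    (hc : ∀ (x : R) (c : Λ), φ x * c = c * φ x)
    {m : ℕ} (A : Matrix (Fin m) (Fin m) R) :
    d (A.det) = ∑ k, ∑ a, φ (adjugate A k a) * d (A a k) := by
  rw [det_apply, map_sum]
  have key : ∀ σ : Equiv.Perm (Fin m),
      d (Equiv.Perm.sign σ • ∏ i, A (σ i) i)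
      = ∑ k, (Equiv.Perm.sign σ : ℤ) •
          (φ (∏ i ∈ Finset.univ.erase k, A (σ i) i) * d (A (σ k) k)) := by
    intro σ
    rw [Units.smul_def, map_zsmul, dProd φ d hleib hc, Finset.smul_sum]
  rw [Finset.sum_congr rfl fun σ _ => key σ, Finset.sum_comm]
  refine Finset.sum_congr rfl fun k _ => ?_
  have expand : ∀ a : Fin m, φ (adjugate A k a) * d (A a k)
      = ∑ σ : Equiv.Perm (Fin m), (if σ k = a then
          (Equiv.Perm.sign σ : ℤ) •
            (φ (∏ i ∈ Finset.univ.erase k, A (σ i) i) * d (A a k)) else 0) := by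
    intro a
    rw [adj_col, det_apply, map_sum, Finset.sum_mul]
    refine Finset.sum_congr rfl fun σ _ => ?_
    rw [Units.smul_def, map_zsmul, smul_mul_assoc]
    have hprod : (∏ i, A.updateCol k (Pi.single a 1) (σ i) i)
        = (if σ k = a then 1 else 0) * ∏ i ∈ Finset.univ.erase k, A (σ i) i := by
      rw [← Finset.mul_prod_erase Finset.univ _ (Finset.mem_univ k)]
      congr 1
      · rw [updateCol_apply, if_pos rfl, Pi.single_apply]
      · exact Finset.prod_congr rfl fun i hi => by
          rw [updateCol_apply, if_neg (Finset.ne_of_mem_erase hi)]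
    rw [hprod]
    split_ifs with h
    · rw [one_mul]
    · rw [zero_mul, map_zero, zero_mul, smul_zero]
  rw [Finset.sum_congr rfl fun a _ => expand a, Finset.sum_comm]
  refine Finset.sum_congr rfl fun σ _ => ?_
  rw [Finset.sum_ite_eq]
  simp

lemma ncDet_map {m : ℕ} (φ : R →+* Λ) (A : Matrix (Fin m) (Fin m) R) :
    ncDet (A.map φ) = φ A.det := by
  rw [det_apply, map_sum, ncDet]
  refine Finset.sum_congr rfl fun σ _ => ?_
  rw [Units.smul_def, map_zsmul]
  congr 1
  rw [Fin.prod_univ_def, map_list_prod φ, List.map_map]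
  rfl

end CommDet

section Good
variable {Λ : Type*} [Ring Λ] [Algebra ℝ Λ]

/-- The subring of "good" elements: central elements along which `E` satisfies
the (even) Leibniz rule. -/
def goodSubring (E : Module.End ℝ Λ) (hE1 : E 1 = 0) : Subring Λ where
  carrier := {x | (∀ c, Commute x c) ∧ ∀ u, E (x * u) = E x * u + x * E u}
  one_mem' := ⟨fun c => Commute.one_left c, fun u => by rw [one_mul, hE1, zero_mul, one_mul, zero_add]⟩
  zero_mem' := ⟨fun c => Commute.zero_left c, fun u => by simp⟩
  add_mem' := fun {x y} hx hy => ⟨fun c => (hx.1 c).add_left (hy.1 c), fun u => by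
    rw [add_mul, map_add, map_add, hx.2 u, hy.2 u]
    noncomm_ring⟩
  neg_mem' := fun {x} hx => ⟨fun c => (hx.1 c).neg_left, fun u => by
    rw [neg_mul, map_neg, map_neg, hx.2 u, neg_add, neg_mul, neg_mul]⟩
  mul_mem' := fun {x y} hx hy => ⟨fun c => (hx.1 c).mul_left (hy.1 c), fun u => by
    have h1 : E (x * y) = E x * y + x * E y := hx.2 y
    have h2 := hx.2 (y * u)
    have h3 := hy.2 u
    rw [mul_assoc, h2, h3, h1, mul_add]
    noncomm_ring⟩

lemma mem_goodSubring {E : Module.End ℝ Λ} {hE1 : E 1 = 0} {x : Λ} :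
    x ∈ goodSubring E hE1 ↔ (∀ c, Commute x c) ∧ ∀ u, E (x * u) = E x * u + x * E u :=
  Iff.rfl

/-- Good elements commute with everything, in particular with each other. -/
@[reducible] def goodCommRing (E : Module.End ℝ Λ) (hE1 : E 1 = 0) : CommRing (goodSubring E hE1) :=
  { (inferInstance : Ring (goodSubring E hE1)) with
    mul_comm := fun a b => Subtype.ext (a.2.1 (b : Λ)) }

end Good
set_option maxHeartbeats 2000000 in
set_option synthInstance.maxHeartbeats 200000 in
/-- in the Grassmann algebra generated by the `θᵢⱼ` (odd,
anticommuting, with even products central), the left Grassmann partial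
derivatives `D i j = ∂_{θᵢⱼ}` (characterized by `∂(1) = 0` and the odd Leibniz
rule `∂(θ_{kl}·u) = δ·u − θ_{kl}·∂u`) satisfy
`∂_{θᵢⱼ} det(I − θ̂θ) = 2 ((I − θ̂θ)⁻¹ θ̂)_{ji} · det(I − θ̂θ)`. -/
theorem grassmann_deriv_det (m n : ℕ) (Λ : Type*) [Ring Λ] [Algebra ℝ Λ]
    (θ : Matrix (Fin n ⊕ Fin n) (Fin m) Λ)
    (hodd : ∀ i j k l, θ i j * θ k l = -(θ k l * θ i j))
    (hcent : ∀ i j k l (c : Λ), Commute (θ i j * θ k l) c)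
    (D : (Fin n ⊕ Fin n) → Fin m → Module.End ℝ Λ)
    (hD1 : ∀ i j, D i j 1 = 0)
    (hDθ : ∀ i j k l (u : Λ),
      D i j (θ k l * u) = (if k = i ∧ l = j then u else 0) - θ k l * D i j u)
    (i : Fin n ⊕ Fin n) (j : Fin m) :
    D i j (ncDet (1 - θᵀ * sympJ n Λ * θ)) =
      (2 : ℝ) • (((Ring.inverse (1 - θᵀ * sympJ n Λ * θ) * (θᵀ * sympJ n Λ) :
          Matrix (Fin m) (Fin n ⊕ Fin n) Λ)) j i
        * ncDet (1 - θᵀ * sympJ n Λ * θ)) := by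
  classical
  set θh := θᵀ * sympJ n Λ with hθh
  set N := θh * θ with hNdef
  set E : Module.End ℝ Λ := D i j with hEdef
  have hE1' : E 1 = 0 := hD1 i j
  set G : Subring Λ := goodSubring E hE1' with hGdef
  letI : CommRing G := goodCommRing E hE1'
  set ε : (Fin n ⊕ Fin n) → Fin m → Λ := fun k l => if k = i ∧ l = j then 1 else 0 with hεdef
  have hεc : ∀ k l (c : Λ), ε k l * c = c * ε k l := by
    intro k l c; simp only [hεdef]; split_ifs <;> simp
  have hEθu : ∀ k l u, E (θ k l * u) = ε k l * u - θ k l * E u := by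
    intro k l u
    rw [hEdef, hDθ i j k l u, hεdef]
    split_ifs with h <;> simp [h]
  have hEθ : ∀ k l, E (θ k l) = ε k l := by
    intro k l
    have h := hEθu k l 1
    rwa [mul_one, hE1', mul_zero, sub_zero, mul_one] at h
  have hθsq : ∀ k l, θ k l * θ k l = 0 := by
    intro k l
    have h2 : θ k l * θ k l + θ k l * θ k l = 0 := by
      nth_rewrite 1 [hodd k l k l]; rw [neg_add_cancel]
    calc θ k l * θ k l = (2⁻¹ : ℝ) • (θ k l * θ k l + θ k l * θ k l) := by
          rw [← two_smul ℝ, smul_smul]; norm_num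
      _ = 0 := by rw [h2, smul_zero]
  have hθθsq : ∀ a b c d, (θ a b * θ c d) * (θ a b * θ c d) = 0 := by
    intro a b c d
    have h : (θ a b * θ c d) * (θ a b * θ c d) = -((θ a b * θ a b) * (θ c d * θ c d)) := by
      rw [mul_assoc, ← mul_assoc (θ c d), hodd c d a b]
      noncomm_ring
    rw [h, hθsq, zero_mul, neg_zero]
  have hEθθ : ∀ a b c d, E (θ a b * θ c d) = ε a b * θ c d - ε c d * θ a b := by
    intro a b c d
    rw [hEθu, hEθ, ← hεc]
  have hθθmem : ∀ a b c d, θ a b * θ c d ∈ G := by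
    intro a b c d
    refine ⟨fun c' => hcent a b c d c', fun u => ?_⟩
    calc E (θ a b * θ c d * u)
        = ε a b * (θ c d * u) - θ a b * (ε c d * u - θ c d * E u) := by
          rw [mul_assoc, hEθu, hEθu]
      _ = ε a b * (θ c d * u) - ε c d * (θ a b * u) + θ a b * (θ c d * E u) := by
          rw [mul_sub, ← mul_assoc (θ a b) (ε c d) u, ← hεc, mul_assoc]
          noncomm_ring
      _ = (ε a b * θ c d - ε c d * θ a b) * u + θ a b * θ c d * E u := by noncomm_ring
      _ = E (θ a b * θ c d) * u + θ a b * θ c d * E u := by rw [hEθθ]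
  have hJcast : ∀ (k l : Fin n ⊕ Fin n), sympJ n Λ k l = ((sympJ n ℤ k l : ℤ) : Λ) := by
    intro k l
    rcases k with k | k <;> rcases l with l | l <;>
      simp [sympJ, Matrix.fromBlocks_apply₁₁, Matrix.fromBlocks_apply₁₂,
        Matrix.fromBlocks_apply₂₁, Matrix.fromBlocks_apply₂₂, Matrix.one_apply,
        Matrix.neg_apply, apply_ite (fun z : ℤ => (z : Λ))]
  have hJZanti : ∀ (k l : Fin n ⊕ Fin n), sympJ n ℤ k l = - sympJ n ℤ l k := by
    intro k l
    rcases k with k | k <;> rcases l with l | l <;>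
      simp [sympJ, Matrix.fromBlocks_apply₁₁, Matrix.fromBlocks_apply₁₂,
        Matrix.fromBlocks_apply₂₁, Matrix.fromBlocks_apply₂₂, Matrix.one_apply,
        Matrix.neg_apply, eq_comm]
  have hNab : ∀ a b, N a b = ∑ l, ∑ k, (sympJ n ℤ l k) • (θ l a * θ k b) := by
    intro a b
    rw [hNdef, hθh, Matrix.mul_apply]
    simp_rw [Matrix.mul_apply, Matrix.transpose_apply, Finset.sum_mul]
    rw [Finset.sum_comm]
    refine Finset.sum_congr rfl fun l _ => Finset.sum_congr rfl fun k _ => ?_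
    rw [hJcast, ← (Int.cast_commute (sympJ n ℤ l k) (θ l a)).eq, mul_assoc, ← zsmul_eq_mul]
  have hNmemG : ∀ a b, N a b ∈ G := by
    intro a b
    rw [hNab]
    exact Subring.sum_mem _ fun l _ => Subring.sum_mem _ fun k _ =>
      zsmul_mem (hθθmem l a k b) _
  have hMmem : ∀ a b, (1 - N) a b ∈ G := by
    intro a b
    rw [Matrix.sub_apply, Matrix.one_apply]
    refine Subring.sub_mem _ ?_ (hNmemG a b)
    split_ifs
    · exact Subring.one_mem _
    · exact Subring.zero_mem _
  set NG : Matrix (Fin m) (Fin m) G := fun a b => ⟨N a b, hNmemG a b⟩ with hNG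
  set MG : Matrix (Fin m) (Fin m) G := 1 - NG with hMGdef
  have hMGcoe : ∀ a b, ((MG a b : Λ)) = (1 - N) a b := by
    intro a b
    rw [hMGdef, Matrix.sub_apply, Matrix.sub_apply, Matrix.one_apply, Matrix.one_apply]
    by_cases hab : a = b <;> simp [hab, hNG]
  have hmapMG : (1 : Matrix (Fin m) (Fin m) Λ) - N = MG.map (Subring.subtype G) := by
    ext a b
    rw [Matrix.map_apply]
    exact (hMGcoe a b).symm
  have hNnilΛ : ∀ a b, IsNilpotent (N a b) := by
    intro a b
    rw [hNab, ← Finset.sum_product']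
    refine Commute.isNilpotent_sum (fun p _ => ?_) (fun p q _ _ => ?_)
    · refine ⟨2, ?_⟩
      rw [sq, smul_mul_assoc, mul_smul_comm, hθθsq, smul_zero, smul_zero]
    · exact Commute.smul_left
        (hcent p.1 a p.2 b (sympJ n ℤ q.1 q.2 • (θ q.1 a * θ q.2 b))) _
  have hNnilG : ∀ a b, IsNilpotent (NG a b) := by
    intro a b
    obtain ⟨c, hc⟩ := hNnilΛ a b
    refine ⟨c, Subtype.ext ?_⟩
    rw [SubmonoidClass.coe_pow]
    exact hc
  have hdetnil : IsNilpotent (MG.det - 1) := by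
    set I : Ideal ↥G := Ideal.span (Set.range fun p : Fin m × Fin m => NG p.1 p.2) with hI
    have hmem : MG.det - 1 ∈ I := by
      rw [← Ideal.Quotient.eq_zero_iff_mem, RingHom.map_sub, RingHom.map_one]
      have hmk : (Ideal.Quotient.mk I).mapMatrix MG = 1 := by
        rw [hMGdef, RingHom.map_sub, RingHom.map_one]
        have hz : (Ideal.Quotient.mk I).mapMatrix NG = 0 := by
          ext a b
          rw [RingHom.mapMatrix_apply, Matrix.map_apply, Matrix.zero_apply]
          exact Ideal.Quotient.eq_zero_iff_mem.mpr (Ideal.subset_span ⟨(a, b), rfl⟩)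
        rw [hz, sub_zero]
      rw [RingHom.map_det, hmk, det_one, sub_self]
    have hle : I ≤ nilradical ↥G := by
      rw [hI, Ideal.span_le]
      rintro x ⟨p, rfl⟩
      exact mem_nilradical.mpr (hNnilG p.1 p.2)
    exact mem_nilradical.mp (hle hmem)
  have hdetU : IsUnit MG.det := by
    have h := hdetnil.isUnit_add_right_of_commute isUnit_one (Commute.all _ _)
    rwa [sub_add_cancel] at h
  have hMGinv1 : MG * (Ring.inverse MG.det • adjugate MG) = 1 := by
    rw [← Matrix.inv_def]
    exact Matrix.mul_nonsing_inv MG hdetU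
  have hMGinv2 : (Ring.inverse MG.det • adjugate MG) * MG = 1 := by
    rw [← Matrix.inv_def]
    exact Matrix.nonsing_inv_mul MG hdetU
  set ψ : Matrix (Fin m) (Fin m) ↥G →+* Matrix (Fin m) (Fin m) Λ :=
    (Subring.subtype G).mapMatrix with hψ
  have hmap' : ∀ A : Matrix (Fin m) (Fin m) ↥G, A.map (Subring.subtype G) = ψ A :=
    fun A => rfl
  have hB1 : ((1 : Matrix (Fin m) (Fin m) Λ) - N)
      * ((Ring.inverse MG.det • adjugate MG).map (Subring.subtype G)) = 1 := by
    rw [hmapMG, hmap', hmap', ← RingHom.map_mul, hMGinv1, RingHom.map_one]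
  have hB2 : ((Ring.inverse MG.det • adjugate MG).map (Subring.subtype G))
      * ((1 : Matrix (Fin m) (Fin m) Λ) - N) = 1 := by
    rw [hmapMG, hmap', hmap', ← RingHom.map_mul, hMGinv2, RingHom.map_one]
  have hu : IsUnit ((1 : Matrix (Fin m) (Fin m) Λ) - N) := ⟨⟨_, _, hB1, hB2⟩, rfl⟩
  have hRinv : Ring.inverse ((1 : Matrix (Fin m) (Fin m) Λ) - N)
      = (Ring.inverse MG.det • adjugate MG).map (Subring.subtype G) := by
    rw [← hu.unit_spec, Ring.inverse_unit]
    exact Units.inv_eq_of_mul_eq_one_right (by rw [hu.unit_spec]; exact hB1)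
  have hθh_apply : ∀ (x : Fin m) (y : Fin n ⊕ Fin n),
      θh x y = ∑ l, (sympJ n ℤ l y) • θ l x := by
    intro x y
    rw [hθh, Matrix.mul_apply]
    refine Finset.sum_congr rfl fun l _ => ?_
    rw [Matrix.transpose_apply, hJcast, ← (Int.cast_commute (sympJ n ℤ l y) (θ l x)).eq,
      ← zsmul_eq_mul]
  have hS1 : ∀ a b, (∑ l, ∑ k, (sympJ n ℤ l k) • (ε l a * θ k b))
      = if a = j then -θh b i else 0 := by
    intro a b
    by_cases ha : a = j
    · subst ha
      rw [if_pos rfl]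
      simp only [hεdef, and_true, ite_mul, one_mul, zero_mul, smul_ite, smul_zero]
      rw [Finset.sum_comm]
      simp only [Finset.sum_ite_eq', Finset.mem_univ, if_true]
      rw [hθh_apply, ← Finset.sum_neg_distrib]
      refine Finset.sum_congr rfl fun k _ => ?_
      rw [hJZanti i k, neg_smul]
    · rw [if_neg ha]
      simp [hεdef, ha]
  have hS2 : ∀ a b, (∑ l, ∑ k, (sympJ n ℤ l k) • (ε k b * θ l a))
      = if b = j then θh a i else 0 := by
    intro a b
    by_cases hb : b = j
    · subst hb
      rw [if_pos rfl]
      simp only [hεdef, and_true, ite_mul, one_mul, zero_mul, smul_ite, smul_zero]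
      simp only [Finset.sum_ite_eq', Finset.mem_univ, if_true]
      rw [hθh_apply]
    · rw [if_neg hb]
      simp [hεdef, hb]
  have hENab : ∀ a b, E (N a b)
      = (if a = j then -θh b i else 0) - (if b = j then θh a i else 0) := by
    intro a b
    rw [hNab, map_sum]
    simp_rw [map_sum, map_zsmul, hEθθ, smul_sub, Finset.sum_sub_distrib]
    rw [hS1, hS2]
  have hEM : ∀ a b, E ((1 - N) a b)
      = (if a = j then θh b i else 0) + (if b = j then θh a i else 0) := by
    intro a b
    rw [Matrix.sub_apply, map_sub, hENab]
    have h1 : E ((1 : Matrix (Fin m) (Fin m) Λ) a b) = 0 := by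
      rw [Matrix.one_apply]
      split_ifs
      · exact hE1'
      · exact map_zero E
    rw [h1, zero_sub, neg_sub]
    split_ifs <;> simp [add_comm, sub_neg_eq_add]
  have hNsym : ∀ a b, N a b = N b a := by
    intro a b
    rw [hNab, hNab]
    conv_rhs => rw [Finset.sum_comm]
    refine Finset.sum_congr rfl fun x _ => Finset.sum_congr rfl fun y _ => ?_
    rw [hodd y b x a, hJZanti y x, neg_smul, smul_neg, neg_neg]
  have hMGsym : MGᵀ = MG := by
    ext a b
    rw [Matrix.transpose_apply]
    rw [hMGcoe, hMGcoe, Matrix.sub_apply, Matrix.sub_apply, hNsym b a,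
      Matrix.one_apply, Matrix.one_apply]
    congr 1
    exact if_congr eq_comm rfl rfl
  have hadjsym : ∀ k, adjugate MG k j = adjugate MG j k := by
    intro k
    conv_lhs => rw [← hMGsym]
    rw [← adjugate_transpose, Matrix.transpose_apply]
  set d : ↥G →+ Λ := AddMonoidHom.mk' (fun x : ↥G => E (x : Λ))
    (fun x y => by simp only [Subring.coe_add, map_add]) with hd
  have hdapp : ∀ x : ↥G, d x = E (x : Λ) := fun x => rfl
  have hleibd : ∀ x y : ↥G, d (x * y) = d x * (Subring.subtype G) y
      + (Subring.subtype G) x * d y := by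
    intro x y
    have h := (mem_goodSubring.mp x.2).2 (y : Λ)
    rw [hdapp, hdapp, hdapp, Subring.coe_mul]
    exact h
  have hcd : ∀ (x : ↥G) (c : Λ), (Subring.subtype G) x * c = c * (Subring.subtype G) x :=
    fun x c => ((mem_goodSubring.mp x.2).1 c).eq
  have hkey := dDet (Subring.subtype G) d hleibd hcd MG
  have hncdet : ncDet ((1 : Matrix (Fin m) (Fin m) Λ) - N) = ((MG.det : ↥G) : Λ) := by
    rw [hmapMG, ncDet_map]
    rfl
  rw [hncdet, show E ((MG.det : ↥G) : Λ) = d MG.det from rfl, hkey]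
  have hdMG : ∀ a k, d (MG a k)
      = (if a = j then θh k i else 0) + (if k = j then θh a i else 0) := by
    intro a k
    rw [hdapp, hMGcoe, hEM]
  simp_rw [hdMG]
  have hsplit : ∀ k a, (Subring.subtype G (adjugate MG k a))
        * ((if a = j then θh k i else 0) + (if k = j then θh a i else 0))
      = (if a = j then ((adjugate MG k a : ↥G) : Λ) * θh k i else 0)
        + (if k = j then ((adjugate MG k a : ↥G) : Λ) * θh a i else 0) := by
    intro k a
    split_ifs <;> simp [mul_add]
  simp_rw [hsplit, Finset.sum_add_distrib]
  have hT1 : (∑ k, ∑ a, if a = j then ((adjugate MG k a : ↥G) : Λ) * θh k i else 0)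
      = ∑ a, ((adjugate MG j a : ↥G) : Λ) * θh a i := by
    simp_rw [Finset.sum_ite_eq', Finset.mem_univ, if_true]
    refine Finset.sum_congr rfl fun k _ => ?_
    rw [hadjsym k]
  have hT2 : (∑ k, ∑ a, if k = j then ((adjugate MG k a : ↥G) : Λ) * θh a i else 0)
      = ∑ a, ((adjugate MG j a : ↥G) : Λ) * θh a i := by
    have hpull : ∀ k, (∑ a, if k = j then ((adjugate MG k a : ↥G) : Λ) * θh a i else 0)
        = if k = j then ∑ a, ((adjugate MG k a : ↥G) : Λ) * θh a i else 0 := by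
      intro k
      split_ifs
      · rfl
      · exact Finset.sum_const_zero
    simp_rw [hpull, Finset.sum_ite_eq', Finset.mem_univ, if_true]
  rw [hT1, hT2, two_smul]
  have hentry : (Ring.inverse ((1 : Matrix (Fin m) (Fin m) Λ) - N) * θh) j i
        * ((MG.det : ↥G) : Λ)
      = ∑ a, ((adjugate MG j a : ↥G) : Λ) * θh a i := by
    rw [hRinv, Matrix.mul_apply, Finset.sum_mul]
    refine Finset.sum_congr rfl fun a _ => ?_
    rw [Matrix.map_apply, Matrix.smul_apply, smul_eq_mul]
    rw [mul_assoc, ← ((mem_goodSubring.mp (MG.det).2).1 (θh a i)).eq, ← mul_assoc]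
    simp only [Subring.coe_subtype]
    rw [← Subring.coe_mul]
    have hinv : (Ring.inverse MG.det * adjugate MG j a) * MG.det = adjugate MG j a := by
      rw [mul_comm (Ring.inverse MG.det), mul_assoc, Ring.inverse_mul_cancel _ hdetU, mul_one]
    rw [hinv]
  rw [hentry]
end
end
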